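/- Let f, G : ℝ → ℝ be continuously differentiable and let t ≥ 0 be such that G(t) < 1. Then the limit as T → t from the right of (1/(T − t))·[ f(T)·(1 − G(T))/(1 − G(t)) + (1/(1 − G(t)))·∫_t^T f(T − u) G'(u) du − f(t) ] exists and equals f'(t) + (G'(t)/(1 − G(t)))·(f(0) − f(t)). -/

import Mathlib

set_option maxHeartbeats 1000000

open MeasureTheory

/-- Proposition 1 (generator of the backward recurrence time process): for `f, G`
continuously differentiable and `t ≥ 0` with `G(t) < 1`,
`lim_{T → t⁺} (1/(T-t))·[f(T)(1-G(T))/(1-G(t)) + (1/(1-G(t)))∫_t^T f(T-u)G'(u) du - f(t)]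
  = f'(t) + (G'(t)/(1-G(t)))·(f(0) - f(t))`. -/
theorem backward_recurrence_generator_limit
    (f G : ℝ → ℝ) (hf : ContDiff ℝ 1 f) (hG : ContDiff ℝ 1 G)
    (t : ℝ) (ht : 0 ≤ t) (hGt : G t < 1) :
    Filter.Tendsto
      (fun T => (1 / (T - t)) *
        (f T * (1 - G T) / (1 - G t) +
          (1 / (1 - G t)) * (∫ u in t..T, f (T - u) * deriv G u) - f t))
      (nhdsWithin t (Set.Ioi t))
      (nhds (deriv f t + (deriv G t / (1 - G t)) * (f 0 - f t))) := by
  have hc : (1 : ℝ) - G t ≠ 0 := by linarith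
  have hfd : Differentiable ℝ f := hf.differentiable one_ne_zero
  have hGd : Differentiable ℝ G := hG.differentiable one_ne_zero
  have hG' : Continuous (deriv G) := hG.continuous_deriv le_rfl
  set c : ℝ := f 0 * deriv G t with hcdef
  set A : ℝ → ℝ := fun T => f T * (1 - G T) / (1 - G t) with hA
  have hAt : A t = f t := by
    simp only [hA]
    field_simp
  have hA' : HasDerivAt A ((deriv f t * (1 - G t) - f t * deriv G t) / (1 - G t)) t := by
    have h1 : HasDerivAt (fun T => f T * (1 - G T))
        (deriv f t * (1 - G t) + f t * (0 - deriv G t)) t :=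
      (hfd t).hasDerivAt.mul ((hasDerivAt_const t (1 : ℝ)).sub (hGd t).hasDerivAt)
    have h2 := h1.div_const (1 - G t)
    rw [show deriv f t * (1 - G t) - f t * deriv G t = deriv f t * (1 - G t) + f t * (0 - deriv G t) by ring]
    exact h2
  -- Part 1: difference quotient of A
  have hpart1 : Filter.Tendsto (fun T => (1 / (T - t)) * (A T - A t))
      (nhdsWithin t (Set.Ioi t))
      (nhds ((deriv f t * (1 - G t) - f t * deriv G t) / (1 - G t))) := by
    have h3 := (hasDerivAt_iff_tendsto_slope.mp hA').mono_left
      (nhdsWithin_mono t (fun y hy => ne_of_gt hy))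
    refine h3.congr (fun T => ?_)
    simp [slope_def_field, div_eq_inv_mul]
  -- Part 2: averaged integral
  have hpart2 : Filter.Tendsto
      (fun T => (1 / (T - t)) * ∫ u in t..T, f (T - u) * deriv G u)
      (nhdsWithin t (Set.Ioi t)) (nhds c) := by
    rw [Metric.tendsto_nhdsWithin_nhds]
    intro ε hε
    have hcont : ContinuousAt (fun p : ℝ × ℝ => f (p.1 - p.2) * deriv G p.2) (t, t) :=
      ((hf.continuous.comp (continuous_fst.sub continuous_snd)).mul
        (hG'.comp continuous_snd)).continuousAt
    rw [Metric.continuousAt_iff] at hcont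
    obtain ⟨δ, hδpos, hδ⟩ := hcont (ε / 2) (by positivity)
    refine ⟨δ, hδpos, ?_⟩
    intro T hT hdist
    have hTt : t < T := hT
    have hdT : |T - t| < δ := by rwa [Real.dist_eq] at hdist
    have hbound : ∀ u ∈ Set.uIoc t T, ‖f (T - u) * deriv G u - c‖ ≤ ε / 2 := by
      intro u hu
      rw [Set.uIoc_of_le hTt.le] at hu
      have hdu : dist ((T, u) : ℝ × ℝ) (t, t) < δ := by
        rw [Prod.dist_eq]
        refine max_lt hdist ?_
        rw [Real.dist_eq, abs_of_pos (by linarith [hu.1])]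
        calc u - t ≤ T - t := by linarith [hu.2]
          _ ≤ |T - t| := le_abs_self _
          _ < δ := hdT
      have h4 := hδ hdu
      simp only [sub_self] at h4
      rw [Real.dist_eq] at h4
      rw [Real.norm_eq_abs]
      exact h4.le
    have hintble : IntervalIntegrable (fun u => f (T - u) * deriv G u) volume t T :=
      ((hf.continuous.comp (continuous_const.sub continuous_id)).mul hG').intervalIntegrable t T
    have hI : ‖(∫ u in t..T, f (T - u) * deriv G u) - (T - t) * c‖ ≤ ε / 2 * |T - t| := by
      have hconst : (T - t) * c = ∫ _u in t..T, c := by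
        rw [intervalIntegral.integral_const]; simp [smul_eq_mul]
      rw [hconst, ← intervalIntegral.integral_sub hintble (intervalIntegrable_const)]
      exact intervalIntegral.norm_integral_le_of_norm_le_const hbound
    have hTne : T - t ≠ 0 := by linarith
    have heq : (1 / (T - t)) * (∫ u in t..T, f (T - u) * deriv G u) - c
        = (1 / (T - t)) * ((∫ u in t..T, f (T - u) * deriv G u) - (T - t) * c) := by
      field_simp
    rw [Real.dist_eq, heq, abs_mul, abs_div, abs_one]
    calc 1 / |T - t| * |(∫ u in t..T, f (T - u) * deriv G u) - (T - t) * c|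
        ≤ 1 / |T - t| * (ε / 2 * |T - t|) := by
          apply mul_le_mul_of_nonneg_left _ (by positivity)
          rw [← Real.norm_eq_abs ((∫ u in t..T, f (T - u) * deriv G u) - (T - t) * c)]
          exact hI
      _ = ε / 2 := by
          have habs : |T - t| ≠ 0 := abs_ne_zero.mpr hTne
          field_simp
      _ < ε := by linarith
  -- Combine
  have hsum := hpart1.add (hpart2.const_mul (1 / (1 - G t)))
  have hval : (deriv f t * (1 - G t) - f t * deriv G t) / (1 - G t) + (1 / (1 - G t)) * c
      = deriv f t + (deriv G t / (1 - G t)) * (f 0 - f t) := by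
    field_simp [hcdef]
    ring
  rw [hval] at hsum
  refine hsum.congr (fun T => ?_)
  rw [hAt]
  ring
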